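/- For an n×n (0,1)-matrix A in which every row has exactly r ones (with 1 ≤ r ≤ n), the permanent of A satisfies per(A) ≤ (r!)^{n/r}. -/

import Mathlib

open Finset Real

/-- Jensen-type inequality from convexity of `x log x`. -/
lemma jensen_pow_pow {ι : Type*} (s : Finset ι) (hs : s.Nonempty) (t : ι → ℕ) :
    ((∑ k ∈ s, (t k : ℝ)) / s.card) ^ (∑ k ∈ s, t k) ≤ ∏ k ∈ s, (t k : ℝ) ^ (t k) := by
  set c : ℝ := (s.card : ℝ) with hc
  have hcpos : (0:ℝ) < c := by rw [hc]; exact_mod_cast Finset.card_pos.mpr hs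
  by_cases hT : (∑ k ∈ s, t k) = 0
  · have hall : ∀ k ∈ s, t k = 0 := by
      intro k hk; exact (Finset.sum_eq_zero_iff.mp hT) k hk
    rw [hT, pow_zero]
    refine le_of_eq ?_
    refine (Finset.prod_eq_one fun k hk => ?_).symm
    rw [hall k hk]; norm_num
  · have hTpos : 0 < (∑ k ∈ s, t k) := Nat.pos_of_ne_zero hT
    set T : ℝ := ∑ k ∈ s, (t k : ℝ) with hTdef
    have hTcast : T = ((∑ k ∈ s, t k : ℕ) : ℝ) := by push_cast [hTdef]; ring
    have hTR : 0 < T := by rw [hTcast]; exact_mod_cast hTpos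
    have hLpos : 0 < ((T / c) ^ (∑ k ∈ s, t k)) := pow_pos (div_pos hTR hcpos) _
    have hfactor : ∀ k ∈ s, (0:ℝ) < (t k : ℝ) ^ (t k) := by
      intro k hk
      rcases Nat.eq_zero_or_pos (t k) with h | h
      · simp [h]
      · exact pow_pos (by exact_mod_cast h) _
    have hRpos : 0 < ∏ k ∈ s, (t k : ℝ) ^ (t k) := Finset.prod_pos hfactor
    rw [← Real.log_le_log_iff hLpos hRpos]
    rw [Real.log_pow, Real.log_prod (fun k hk => (hfactor k hk).ne')]
    have hlogs : ∀ k ∈ s, Real.log ((t k : ℝ) ^ (t k)) = (t k : ℝ) * Real.log (t k) := by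
      intro k hk; rw [Real.log_pow]
    rw [Finset.sum_congr rfl hlogs]
    -- Jensen
    have hjen := Real.convexOn_mul_log.map_sum_le (t := s) (w := fun _ => 1 / c)
      (p := fun k => (t k : ℝ)) (fun k _ => by positivity)
      (by rw [Finset.sum_const, nsmul_eq_mul, ← hc, one_div, mul_inv_cancel₀ hcpos.ne']) (fun k _ => Set.mem_Ici.mpr (Nat.cast_nonneg _))
    simp only [smul_eq_mul] at hjen
    have hsum : (∑ k ∈ s, 1 / c * (t k : ℝ)) = T / c := by
      rw [← Finset.mul_sum, ← hTdef]; ring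
    rw [hsum] at hjen
    have := mul_le_mul_of_nonneg_left hjen hcpos.le
    rw [Finset.mul_sum] at this
    calc ((∑ k ∈ s, t k : ℕ) : ℝ) * Real.log (T / c)
        = c * (T / c * Real.log (T / c)) := by
          rw [← hTcast]
          field_simp
      _ ≤ c * ∑ k ∈ s, 1 / c * ((t k : ℝ) * Real.log (t k)) := by
          rw [Finset.mul_sum]; exact this
      _ = ∑ k ∈ s, (t k : ℝ) * Real.log (t k) := by
          rw [Finset.mul_sum]; apply Finset.sum_congr rfl; intro k _; field_simp

open Equiv

section bij
variable {n : ℕ} (A : Matrix (Fin (n+1)) (Fin (n+1)) ℕ) (i k : Fin (n+1))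

private def ψmap (τ : Equiv.Perm (Fin n)) : Equiv.Perm (Fin (n+1)) :=
  (finSuccEquiv' i).trans ((Equiv.optionCongr τ).trans (finSuccEquiv' k).symm)

lemma ψmap_at (τ : Equiv.Perm (Fin n)) : ψmap i k τ i = k := by
  simp [ψmap]

lemma ψmap_sa (τ : Equiv.Perm (Fin n)) (j : Fin n) :
    ψmap i k τ (i.succAbove j) = k.succAbove (τ j) := by
  simp [ψmap]

private def φmap (σ : Equiv.Perm (Fin (n+1))) : Equiv.Perm (Fin n) :=
  Equiv.removeNone (((finSuccEquiv' i).symm.trans σ).trans (finSuccEquiv' k))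

lemma φmap_sa (σ : Equiv.Perm (Fin (n+1))) (hσ : σ i = k) (j : Fin n) :
    k.succAbove (φmap i k σ j) = σ (i.succAbove j) := by
  have hne : σ (i.succAbove j) ≠ k := by
    rw [← hσ]
    exact fun h => (Fin.succAbove_ne i j) (σ.injective h)
  have he : (((finSuccEquiv' i).symm.trans σ).trans (finSuccEquiv' k)) (some j)
      = finSuccEquiv' k (σ (i.succAbove j)) := by
    simp
  have hnn : finSuccEquiv' k (σ (i.succAbove j)) ≠ none := by
    intro h
    apply hne
    have := finSuccEquiv'_at k
    exact (finSuccEquiv' k).injective (h.trans this.symm)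
  obtain ⟨x, hx⟩ := Option.ne_none_iff_exists'.mp (he.symm ▸ hnn : _)
  have hsome := Equiv.removeNone_some _ ⟨x, hx⟩ (x := j)
  rw [he] at hsome
  have := congrArg (finSuccEquiv' k).symm hsome
  simpa [φmap] using this

lemma minor_card (h01 : ∀ x y, A x y = 0 ∨ A x y = 1) (hik : A i k = 1) :
    ((univ.filter fun σ : Equiv.Perm (Fin (n+1)) => (∀ x, A x (σ x) = 1) ∧ σ i = k).card)
    = ((univ.filter fun τ : Equiv.Perm (Fin n) =>
        ∀ j, A (i.succAbove j) (k.succAbove (τ j)) = 1).card) := by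
  refine Finset.card_bij' (fun σ _ => φmap i k σ) (fun τ _ => ψmap i k τ) ?_ ?_ ?_ ?_
  · intro σ hσ
    rw [Finset.mem_filter] at hσ ⊢
    refine ⟨mem_univ _, fun j => ?_⟩
    rw [φmap_sa i k σ hσ.2.2 j]
    exact hσ.2.1 _
  · intro τ hτ
    rw [Finset.mem_filter] at hτ ⊢
    refine ⟨mem_univ _, fun x => ?_, ψmap_at i k τ⟩
    refine Fin.succAboveCases i ?_ ?_ x
    · rw [ψmap_at i k τ]; exact hik
    · intro j
      rw [ψmap_sa i k τ j]
      exact hτ.2 j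
  · intro σ hσ
    rw [Finset.mem_filter] at hσ
    ext x
    refine Fin.succAboveCases i ?_ ?_ x
    · rw [ψmap_at]; exact congrArg Fin.val hσ.2.2.symm
    · intro j
      rw [ψmap_sa, φmap_sa i k σ hσ.2.2 j]
  · intro τ hτ
    ext j
    have he : (((finSuccEquiv' i).symm.trans (ψmap i k τ)).trans (finSuccEquiv' k)) (some j)
        = some (τ j) := by
      simp [ψmap]
    have hsome := Equiv.removeNone_some (((finSuccEquiv' i).symm.trans (ψmap i k τ)).trans
      (finSuccEquiv' k)) (⟨τ j, he⟩ : ∃ x', _ = some x') (x := j)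
    rw [he] at hsome
    have : φmap i k (ψmap i k τ) j = τ j := by
      simpa [φmap] using hsome
    exact congrArg Fin.val this

end bij

/-- row-sum of a matrix restricted to columns avoiding `k` -/
lemma filter_succAbove_card {n : ℕ} (A : Matrix (Fin (n+1)) (Fin (n+1)) ℕ)
    (r k : Fin (n+1)) :
    (univ.filter fun l : Fin n => A r (k.succAbove l) = 1).card
      = (univ.filter fun c => A r c = 1).card - (if A r k = 1 then 1 else 0) := by
  have hbij : (univ.filter fun l : Fin n => A r (k.succAbove l) = 1).card
      = ((univ.erase k).filter fun c => A r c = 1).card := by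
    refine Finset.card_bij (fun l _ => k.succAbove l) ?_ ?_ ?_
    · intro l hl
      rw [Finset.mem_filter] at hl ⊢
      exact ⟨Finset.mem_erase.mpr ⟨Fin.succAbove_ne k l, mem_univ _⟩, hl.2⟩
    · intro a _ b _ hab
      exact Fin.succAbove_right_injective hab
    · intro c hc
      rw [Finset.mem_filter, Finset.mem_erase] at hc
      obtain ⟨l, hl⟩ := Fin.exists_succAbove_eq hc.1.1
      exact ⟨l, Finset.mem_filter.mpr ⟨mem_univ _, by rw [hl]; exact hc.2⟩, hl⟩
  rw [hbij, Finset.filter_erase]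
  by_cases h : A r k = 1
  · rw [if_pos h]
    exact Finset.card_erase_of_mem (Finset.mem_filter.mpr ⟨mem_univ _, h⟩)
  · rw [if_neg h, Nat.sub_zero]
    congr 1
    exact Finset.erase_eq_of_notMem (fun hc => h (Finset.mem_filter.mp hc).2)

/-- the key factorial identity -/
lemma g_identity (n m : ℕ) (h1 : 1 ≤ m) (h2 : m ≤ n + 1) :
    (m : ℝ) * (((m-1).factorial : ℝ) ^ (1 / ((m-1 : ℕ) : ℝ))) ^ (m - 1)
        * ((m.factorial : ℝ) ^ (1 / (m : ℝ))) ^ (n + 1 - m)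
      = ((m.factorial : ℝ) ^ (1 / (m : ℝ))) ^ (n + 1) := by
  have hm0 : (m : ℝ) ≠ 0 := by positivity
  have hfac : (0:ℝ) < (m.factorial : ℝ) := by exact_mod_cast m.factorial_pos
  have hmid : (((m-1).factorial : ℝ) ^ (1 / ((m-1 : ℕ) : ℝ))) ^ (m - 1)
      = ((m-1).factorial : ℝ) := by
    rcases Nat.exists_eq_add_of_le h1 with ⟨d, rfl⟩
    rcases Nat.eq_zero_or_pos d with rfl | hd
    · norm_num
    · have hd0 : ((1 + d - 1 : ℕ) : ℝ) ≠ 0 := by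
        have : (1 + d - 1 : ℕ) = d := by omega
        rw [this]; positivity
      rw [← Real.rpow_natCast ((((1+d-1).factorial : ℝ)) ^ (1 / ((1+d-1 : ℕ) : ℝ))) (1+d-1),
        ← Real.rpow_mul (by positivity)]
      rw [one_div, inv_mul_cancel₀ hd0, Real.rpow_one]
  rw [hmid]
  have hmul : (m : ℝ) * ((m-1).factorial : ℝ) = (m.factorial : ℝ) := by
    rcases Nat.exists_eq_add_of_le h1 with ⟨d, rfl⟩
    have : (1 + d).factorial = (1 + d) * d.factorial := by
      rw [Nat.add_comm 1 d, Nat.factorial_succ]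
    rw [show (1 + d - 1 : ℕ) = d by omega, this]
    push_cast; ring
  rw [mul_assoc] at *
  rw [← mul_assoc, hmul]
  -- now : (m! : ℝ) * ((m!)^(1/m))^(n+1-m) = ((m!)^(1/m))^(n+1)
  rw [← Real.rpow_natCast ((m.factorial : ℝ) ^ (1 / (m : ℝ))) (n+1-m),
    ← Real.rpow_natCast ((m.factorial : ℝ) ^ (1 / (m : ℝ))) (n+1),
    ← Real.rpow_mul hfac.le, ← Real.rpow_mul hfac.le]
  have hcast : ((n + 1 - m : ℕ) : ℝ) = (n:ℝ) + 1 - (m:ℝ) := by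
    push_cast [Nat.cast_sub h2]; ring
  rw [hcast]
  have hexp : (1:ℝ) + 1 / (m:ℝ) * ((n:ℝ) + 1 - (m:ℝ)) = 1 / (m:ℝ) * ((n:ℝ) + 1) := by
    field_simp
    ring
  rw [Nat.cast_add, Nat.cast_one, ← hexp, Real.rpow_add hfac, Real.rpow_one]

noncomputable def gfun (d : ℕ) : ℝ := (d.factorial : ℝ) ^ (1 / (d:ℝ))

lemma gfun_pos (d : ℕ) : 0 < gfun d :=
  Real.rpow_pos_of_pos (by exact_mod_cast d.factorial_pos) _

def pset {N : ℕ} (A : Matrix (Fin N) (Fin N) ℕ) : Finset (Equiv.Perm (Fin N)) :=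
  univ.filter fun σ => ∀ x, A x (σ x) = 1

def rs {N : ℕ} (A : Matrix (Fin N) (Fin N) ℕ) (j : Fin N) : ℕ :=
  (univ.filter fun c => A j c = 1).card

lemma g_identity' (n m : ℕ) (h1 : 1 ≤ m) (h2 : m ≤ n + 1) :
    (m : ℝ) * ((gfun (m-1)) ^ (m - 1) * (gfun m) ^ (n + 1 - m)) = (gfun m) ^ (n + 1) := by
  rw [← mul_assoc]
  exact g_identity n m h1 h2

lemma bregman_count : ∀ (N : ℕ) (A : Matrix (Fin N) (Fin N) ℕ),
    (∀ x y, A x y = 0 ∨ A x y = 1) →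
    ((pset A).card : ℝ) ≤ ∏ j, gfun (rs A j) := by
  intro N
  induction N with
  | zero =>
    intro A _
    have h1 : (pset A).card ≤ 1 := by
      refine le_trans (Finset.card_filter_le _ _) ?_
      rw [Finset.card_univ, Fintype.card_perm]
      simp
    calc ((pset A).card : ℝ) ≤ 1 := by exact_mod_cast h1
      _ = ∏ j : Fin 0, gfun (rs A j) := by simp
  | succ n IH =>
    intro A h01
    by_cases hP : (pset A).card = 0
    · rw [hP]
      exact_mod_cast Finset.prod_nonneg fun j _ => (gfun_pos _).le
    have hP0 : 0 < (pset A).card := Nat.pos_of_ne_zero hP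
    set P := (pset A).card with hPdef
    obtain ⟨σ₀, hσ₀⟩ := Finset.card_pos.mp hP0
    have hσ₀1 : ∀ x, A x (σ₀ x) = 1 := (Finset.mem_filter.mp hσ₀).2
    have hm1 : ∀ j, 1 ≤ rs A j := by
      intro j
      refine Finset.card_pos.mpr ⟨σ₀ j, ?_⟩
      exact Finset.mem_filter.mpr ⟨mem_univ _, hσ₀1 j⟩
    have hmle : ∀ j, rs A j ≤ n + 1 := by
      intro j
      refine le_trans (Finset.card_filter_le _ _) ?_
      simp
    set t : Fin (n+1) → Fin (n+1) → ℕ :=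
      fun i k => ((pset A).filter fun σ => σ i = k).card with htdef
    have hmaps : ∀ i : Fin (n+1), ∀ σ ∈ pset A, σ i ∈ univ.filter fun c => A i c = 1 :=
      fun i σ hσ => Finset.mem_filter.mpr ⟨mem_univ _, (Finset.mem_filter.mp hσ).2 i⟩
    have ht_sum : ∀ i, ∑ k ∈ univ.filter (fun c => A i c = 1), t i k = P :=
      fun i => (Finset.card_eq_sum_card_fiberwise (hmaps i)).symm
    -- Step 1 : per-row Jensen bound
    have step1 : ∀ i : Fin (n+1),
        ((P:ℝ))^P ≤ ∏ σ ∈ pset A, ((rs A i : ℝ) * (t i (σ i) : ℝ)) := by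
      intro i
      have hne : (univ.filter fun c => A i c = 1).Nonempty :=
        Finset.card_pos.mp (lt_of_lt_of_le Nat.zero_lt_one (hm1 i))
      have hj := jensen_pow_pow (univ.filter fun c => A i c = 1) hne (t i)
      rw [ht_sum i] at hj
      have hb : (∑ k ∈ univ.filter (fun c => A i c = 1), (t i k : ℝ)) = (P:ℝ) := by
        rw [← Nat.cast_sum, ht_sum i]
      rw [hb] at hj
      have hcard : ((univ.filter fun c => A i c = 1).card : ℝ) = (rs A i : ℝ) := rfl
      rw [hcard] at hj
      have hrs0 : ((rs A i : ℝ)) ^ P ≠ 0 := by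
        have : (0:ℝ) < rs A i := by exact_mod_cast hm1 i
        positivity
      have h2 := mul_le_mul_of_nonneg_left hj
        (le_of_lt (by positivity : (0:ℝ) < ((rs A i : ℝ)) ^ P))
      have hLHS : ((rs A i : ℝ)) ^ P * (((P:ℝ) / (rs A i : ℝ)) ^ P) = ((P:ℝ))^P := by
        rw [div_pow]
        field_simp
      rw [hLHS] at h2
      -- now rewrite RHS as product over pset A
      have hfib : ∏ σ ∈ pset A, ((t i (σ i) : ℝ)) =
          ∏ k ∈ univ.filter (fun c => A i c = 1), ((t i k : ℝ)) ^ (t i k) := by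
        rw [← Finset.prod_fiberwise_of_maps_to (hmaps i) (fun σ => ((t i (σ i)) : ℝ))]
        refine Finset.prod_congr rfl fun k _ => ?_
        have hin : ∏ σ ∈ (pset A).filter (fun σ => σ i = k), ((t i (σ i)) : ℝ)
            = ∏ _σ ∈ (pset A).filter (fun σ => σ i = k), ((t i k : ℝ)) :=
          Finset.prod_congr rfl (fun σ hσ => by rw [(Finset.mem_filter.mp hσ).2])
        rw [hin, Finset.prod_const]
      calc ((P:ℝ))^P ≤ ((rs A i : ℝ)) ^ P * ∏ k ∈ univ.filter (fun c => A i c = 1),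
            ((t i k : ℝ)) ^ (t i k) := h2
        _ = ((rs A i : ℝ)) ^ P * ∏ σ ∈ pset A, ((t i (σ i) : ℝ)) := by rw [hfib]
        _ = ∏ σ ∈ pset A, ((rs A i : ℝ) * (t i (σ i) : ℝ)) := by
            rw [Finset.prod_mul_distrib, Finset.prod_const, hPdef]
    -- global product over i
    have hglob : (((P:ℝ))^P)^(n+1) ≤
        ∏ σ ∈ pset A, ∏ i : Fin (n+1), ((rs A i : ℝ) * (t i (σ i) : ℝ)) := by
      calc (((P:ℝ))^P)^(n+1) = ∏ _i : Fin (n+1), ((P:ℝ))^P := by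
            rw [Finset.prod_const, Finset.card_univ, Fintype.card_fin]
        _ ≤ ∏ i : Fin (n+1), ∏ σ ∈ pset A, ((rs A i : ℝ) * (t i (σ i) : ℝ)) :=
            Finset.prod_le_prod (fun _ _ => by positivity) (fun i _ => step1 i)
        _ = ∏ σ ∈ pset A, ∏ i : Fin (n+1), ((rs A i : ℝ) * (t i (σ i) : ℝ)) :=
            Finset.prod_comm
    -- per-sigma bound
    have hper : ∀ σ ∈ pset A,
        ∏ i : Fin (n+1), ((rs A i : ℝ) * (t i (σ i) : ℝ))
          ≤ (∏ j, gfun (rs A j)) ^ (n+1) := by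
      intro σ hσ
      have hσ1 : ∀ x, A x (σ x) = 1 := (Finset.mem_filter.mp hσ).2
      -- t i (σ i) equals the permanent-count of the minor
      have hmin : ∀ i, t i (σ i) = (pset (A.submatrix i.succAbove (σ i).succAbove)).card := by
        intro i
        have hmc := minor_card A i (σ i) h01 (hσ1 i)
        have hl : t i (σ i) = (univ.filter fun σ' : Equiv.Perm (Fin (n+1)) =>
            (∀ x, A x (σ' x) = 1) ∧ σ' i = σ i).card := by
          rw [htdef]
          show ((univ.filter fun σ' : Equiv.Perm (Fin (n+1)) => ∀ x, A x (σ' x) = 1).filter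
            fun σ' => σ' i = σ i).card = _
          rw [Finset.filter_filter]
        rw [hl, hmc]
        rfl
      have hIH : ∀ i : Fin (n+1), ((t i (σ i)) : ℝ) ≤
          ∏ j' : Fin n, gfun (rs (A.submatrix i.succAbove (σ i).succAbove) j') := by
        intro i
        rw [hmin i]
        exact IH _ (fun x y => h01 _ _)
      have hrsmin : ∀ (i : Fin (n+1)) (j' : Fin n),
          rs (A.submatrix i.succAbove (σ i).succAbove) j'
            = rs A (i.succAbove j') - (if A (i.succAbove j') (σ i) = 1 then 1 else 0) := by
        intro i j'
        exact filter_succAbove_card A (i.succAbove j') (σ i)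
      calc ∏ i : Fin (n+1), ((rs A i : ℝ) * (t i (σ i) : ℝ))
          ≤ ∏ i : Fin (n+1), ((rs A i : ℝ) *
              ∏ j' : Fin n, gfun (rs (A.submatrix i.succAbove (σ i).succAbove) j')) := by
            refine Finset.prod_le_prod (fun i _ => by positivity) (fun i _ => ?_)
            exact mul_le_mul_of_nonneg_left (hIH i) (Nat.cast_nonneg _)
        _ = (∏ j, gfun (rs A j)) ^ (n+1) := by
            -- rewrite minors row sums
            simp only [hrsmin]
            -- reindex inner product over erase i
            have hre : ∀ i : Fin (n+1),
                (∏ j' : Fin n, gfun (rs A (i.succAbove j') -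
                    (if A (i.succAbove j') (σ i) = 1 then 1 else 0)))
                = ∏ j ∈ univ.erase i, gfun (rs A j -
                    (if A j (σ i) = 1 then 1 else 0)) := by
              intro i
              have himg : (univ : Finset (Fin n)).image i.succAbove = univ.erase i := by
                ext c
                simp only [Finset.mem_image, Finset.mem_erase, Finset.mem_univ, and_true,
                  true_and]
                constructor
                · rintro ⟨l, rfl⟩; exact Fin.succAbove_ne i l
                · intro hc; exact Fin.exists_succAbove_eq hc
              rw [← himg, Finset.prod_image (fun a _ b _ h => Fin.succAbove_right_injective h)]
            simp only [hre]
            rw [Finset.prod_mul_distrib]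
            -- swap the double product
            have hswap : ∏ i : Fin (n+1), ∏ j ∈ univ.erase i,
                gfun (rs A j - (if A j (σ i) = 1 then 1 else 0))
              = ∏ j : Fin (n+1), ∏ i ∈ univ.erase j,
                gfun (rs A j - (if A j (σ i) = 1 then 1 else 0)) := by
              refine Finset.prod_comm' ?_
              intro x y
              constructor
              · rintro ⟨-, hy⟩
                rw [Finset.mem_erase] at hy
                exact ⟨Finset.mem_erase.mpr ⟨fun h => hy.1 h.symm, mem_univ _⟩, mem_univ _⟩
              · rintro ⟨hx, -⟩
                rw [Finset.mem_erase] at hx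
                exact ⟨mem_univ _, Finset.mem_erase.mpr ⟨fun h => hx.1 h.symm, mem_univ _⟩⟩
            rw [hswap, ← Finset.prod_mul_distrib]
            -- per-j computation
            have hperj : ∀ j : Fin (n+1),
                (rs A j : ℝ) * ∏ i ∈ univ.erase j,
                  gfun (rs A j - (if A j (σ i) = 1 then 1 else 0))
                = (gfun (rs A j)) ^ (n+1) := by
              intro j
              have hcnt : ((univ.erase j).filter fun i => A j (σ i) = 1).card = rs A j - 1 := by
                have h1 : (univ.filter fun i => A j (σ i) = 1).card = rs A j := by
                  refine Finset.card_bij' (fun i _ => σ i) (fun c _ => σ.symm c) ?_ ?_ ?_ ?_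
                  · intro i hi
                    exact Finset.mem_filter.mpr ⟨mem_univ _, (Finset.mem_filter.mp hi).2⟩
                  · intro c hc
                    refine Finset.mem_filter.mpr ⟨mem_univ _, ?_⟩
                    rw [Equiv.apply_symm_apply]
                    exact (Finset.mem_filter.mp hc).2
                  · intro i _; exact Equiv.symm_apply_apply σ i
                  · intro c _; exact Equiv.apply_symm_apply σ c
                rw [Finset.filter_erase]
                have hjmem : j ∈ Finset.filter (fun i => A j (σ i) = 1) univ :=
                  Finset.mem_filter.mpr ⟨mem_univ _, hσ1 j⟩
                rw [Finset.card_erase_of_mem hjmem, h1]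
              have hsplit := Finset.prod_filter_mul_prod_filter_not (univ.erase j)
                (fun i => A j (σ i) = 1)
                (fun i => gfun (rs A j - (if A j (σ i) = 1 then 1 else 0)))
              rw [← hsplit]
              have hc1 : ∏ i ∈ (univ.erase j).filter (fun i => A j (σ i) = 1),
                  gfun (rs A j - (if A j (σ i) = 1 then 1 else 0))
                  = (gfun (rs A j - 1)) ^ (rs A j - 1) := by
                rw [Finset.prod_congr rfl (fun i hi => by
                  rw [if_pos (Finset.mem_filter.mp hi).2]), Finset.prod_const, hcnt]
              have hcard2 : ((univ.erase j).filter fun i => ¬(A j (σ i) = 1)).card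
                  = n + 1 - rs A j := by
                have htot := Finset.card_filter_add_card_filter_not
                  (s := univ.erase j) (p := fun i => A j (σ i) = 1)
                rw [Finset.card_erase_of_mem (mem_univ j), Finset.card_univ,
                  Fintype.card_fin] at htot
                have := hm1 j
                have := hmle j
                omega
              have hc2 : ∏ i ∈ (univ.erase j).filter (fun i => ¬(A j (σ i) = 1)),
                  gfun (rs A j - (if A j (σ i) = 1 then 1 else 0))
                  = (gfun (rs A j)) ^ (n + 1 - rs A j) := by
                rw [Finset.prod_congr rfl (fun i hi => by
                  rw [if_neg (Finset.mem_filter.mp hi).2, Nat.sub_zero]),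
                  Finset.prod_const, hcard2]
              rw [hc1, hc2]
              exact g_identity' n (rs A j) (hm1 j) (hmle j)
            simp only [hperj]
            rw [← Finset.prod_pow]
    -- combine
    have hfinal : (((P:ℝ))^P)^(n+1) ≤ ((∏ j, gfun (rs A j)) ^ (n+1)) ^ P := by
      calc (((P:ℝ))^P)^(n+1) ≤ ∏ σ ∈ pset A, ∏ i : Fin (n+1),
            ((rs A i : ℝ) * (t i (σ i) : ℝ)) := hglob
        _ ≤ ∏ _σ ∈ pset A, (∏ j, gfun (rs A j)) ^ (n+1) :=
            Finset.prod_le_prod (fun σ _ => Finset.prod_nonneg fun i _ => by positivity)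
              (fun σ hσ => hper σ hσ)
        _ = ((∏ j, gfun (rs A j)) ^ (n+1)) ^ P := by rw [Finset.prod_const, hPdef]
    have hGnn : (0:ℝ) ≤ ∏ j, gfun (rs A j) := Finset.prod_nonneg fun j _ => (gfun_pos _).le
    rw [← pow_mul, ← pow_mul] at hfinal
    rw [Nat.mul_comm P (n+1)] at hfinal
    exact le_of_pow_le_pow_left₀ (by positivity) hGnn hfinal

/-- Regular-row-sum special case of the Bregman–Minc inequality: if every row of an
`n × n` (0,1)-matrix has exactly `r` ones (`1 ≤ r ≤ n`), then
`per A ≤ (r !) ^ (n / r)`. -/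
theorem bregman_minc_regular {n r : ℕ} (hr1 : 1 ≤ r) (hrn : r ≤ n)
    (A : Matrix (Fin n) (Fin n) ℕ)
    (h01 : ∀ i j, A i j = 0 ∨ A i j = 1)
    (hrow : ∀ i, (univ.filter fun j => A i j = 1).card = r) :
    (A.permanent : ℝ) ≤ (r.factorial : ℝ) ^ ((n : ℝ) / r) := by
  have key : ∀ σ : Equiv.Perm (Fin n), (∏ i, A i (σ i)) =
      if (∀ i, A i (σ i) = 1) then 1 else 0 := by
    intro σ
    by_cases h : ∀ i, A i (σ i) = 1
    · rw [if_pos h]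
      exact Finset.prod_eq_one fun i _ => h i
    · rw [if_neg h]
      push_neg at h
      obtain ⟨i, hi⟩ := h
      refine Finset.prod_eq_zero (mem_univ i) ?_
      rcases h01 i (σ i) with h0 | h1
      · exact h0
      · exact absurd h1 hi
  have hinv : ∑ σ : Equiv.Perm (Fin n), ∏ i, A (σ i) i
      = ∑ σ : Equiv.Perm (Fin n), ∏ i, A i (σ i) := by
    refine Fintype.sum_bijective (fun σ => σ⁻¹)
      ⟨fun a b h => by simpa using congrArg Inv.inv h, fun b => ⟨b⁻¹, inv_inv b⟩⟩
      _ _ (fun σ => ?_)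
    have := Equiv.prod_comp σ (fun i => A i (σ⁻¹ i))
    simp only [Equiv.Perm.inv_def, Equiv.symm_apply_apply] at this
    simpa using this
  have hper : A.permanent = (pset A).card := by
    show (∑ σ : Equiv.Perm (Fin n), ∏ i, A (σ i) i) = _
    rw [hinv, Finset.sum_congr rfl (fun σ _ => key σ), Finset.sum_boole, Nat.cast_id]
    rfl
  have hrs : ∀ j, rs A j = r := hrow
  calc (A.permanent : ℝ) = ((pset A).card : ℝ) := by rw [hper]
    _ ≤ ∏ j, gfun (rs A j) := bregman_count n A h01
    _ = (r.factorial : ℝ) ^ ((n : ℝ) / r) := by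
      simp only [hrs]
      rw [Finset.prod_const, Finset.card_univ, Fintype.card_fin]
      simp only [gfun]
      rw [← Real.rpow_natCast ((r.factorial : ℝ) ^ (1 / (r:ℝ))) n,
        ← Real.rpow_mul (by positivity)]
      congr 1
      ring
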